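/- Under the assumptions: Ω of finite measure, 0 < δ₁ ≤ b ≤ δ₂, p₀ ≤ p ≤ P₀ with p₀ > 0, |b²(y₀)−b²(y)| ≤ b*(n−1)|y₀−y| for all y ∈ Ω, and diam Ω ≤ R, the bound |I(p) − 1/b̲²| ≤ b*(n−1)R·P₀·|Ω| / (b̲²·δ₁²·p₀·|Ω|) = b*(n−1)R·P₀/(b̲² δ₁² p₀) holds, where b̲ = b(y₀) and I(p) = (∫_Ω p)/(∫_Ω b² p). -/

import Mathlib

open MeasureTheory

theorem stmt_7 (m : ℕ) (Ω : Set (EuclideanSpace ℝ (Fin m)))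
    (hΩm : MeasurableSet Ω) (hΩpos : 0 < volume Ω) (hΩbd : Bornology.IsBounded Ω)
    (p b : EuclideanSpace ℝ (Fin m) → ℝ) (hpm : Measurable p) (hbm : Measurable b)
    (p₀ P₀ δ₁ δ₂ bs R : ℝ) (hp₀ : 0 < p₀) (hδ₁ : 0 < δ₁) (hbs : 0 < bs)
    (hp : ∀ y ∈ Ω, p₀ ≤ p y ∧ p y ≤ P₀)
    (hb : ∀ y ∈ Ω, δ₁ ≤ b y ∧ b y ≤ δ₂)
    (y₀ : EuclideanSpace ℝ (Fin m)) (hy₀ : y₀ ∈ Ω)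
    (hLip : ∀ y ∈ Ω, |(b y₀)^2 - (b y)^2| ≤ bs * (m : ℝ) * ‖y₀ - y‖)
    (hdiam : Metric.diam Ω ≤ R) :
    |(∫ y in Ω, p y) / (∫ y in Ω, (b y)^2 * p y) - 1 / (b y₀)^2| ≤
      bs * (m : ℝ) * R * P₀ / ((b y₀)^2 * δ₁^2 * p₀) := by
  have hΩfin : volume Ω ≠ ⊤ := hΩbd.measure_lt_top.ne
  set V := (volume Ω).toReal with hVdef
  have hVpos : 0 < V := ENNReal.toReal_pos hΩpos.ne' hΩfin
  have hRnn : 0 ≤ R := le_trans Metric.diam_nonneg hdiam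
  have hb0 : (0:ℝ) < b y₀ := lt_of_lt_of_le hδ₁ (hb y₀ hy₀).1
  have hb0sq : (0:ℝ) < (b y₀)^2 := by positivity
  have hP₀ : (0:ℝ) < P₀ := lt_of_lt_of_le (lt_of_lt_of_le hp₀ (hp y₀ hy₀).1) (hp y₀ hy₀).2
  -- integrability
  have hip : IntegrableOn p Ω := by
    apply Measure.integrableOn_of_bounded (M := P₀) hΩfin hpm.aestronglyMeasurable
    filter_upwards [ae_restrict_mem hΩm] with y hy
    rw [Real.norm_eq_abs, abs_of_nonneg (by linarith [(hp y hy).1])]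
    exact (hp y hy).2
  have hibp : IntegrableOn (fun y => (b y)^2 * p y) Ω := by
    apply Measure.integrableOn_of_bounded (M := δ₂^2 * P₀) hΩfin
      ((hbm.pow_const 2).mul hpm).aestronglyMeasurable
    filter_upwards [ae_restrict_mem hΩm] with y hy
    have h1 := hb y hy; have h2 := hp y hy
    have hby : (0:ℝ) < b y := lt_of_lt_of_le hδ₁ h1.1
    rw [Real.norm_eq_abs,
      abs_of_nonneg (mul_nonneg (sq_nonneg _) (by linarith [h2.1]))]
    exact mul_le_mul (by nlinarith [h1.1, h1.2]) h2.2 (by linarith) (by nlinarith)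
  set A := ∫ y in Ω, p y with hA
  set B := ∫ y in Ω, (b y)^2 * p y with hB
  have hconst : IntegrableOn (fun _ => δ₁^2 * p₀) Ω (volume) :=
    integrableOn_const hΩfin
  have hBlb : δ₁^2 * p₀ * V ≤ B := by
    calc δ₁^2 * p₀ * V = (volume Ω).toReal • (δ₁^2 * p₀) := by
          rw [smul_eq_mul]; ring
      _ = ∫ _ in Ω, δ₁^2 * p₀ := (setIntegral_const _).symm
      _ ≤ B := setIntegral_mono_on hconst hibp hΩm
          (fun y hy => by
            have h1 := hb y hy; have h2 := hp y hy
            have : δ₁^2 ≤ (b y)^2 := by nlinarith [h1.1]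
            nlinarith [h2.1])
  have hBpos : 0 < B := lt_of_lt_of_le (by positivity) hBlb
  have hnum : |A * (b y₀)^2 - B| ≤ bs * (m : ℝ) * R * P₀ * V := by
    have h1 : A * (b y₀)^2 - B = ∫ y in Ω, ((b y₀)^2 - (b y)^2) * p y := by
      calc A * (b y₀)^2 - B = (b y₀)^2 * A - B := by ring
        _ = ∫ y in Ω, ((b y₀)^2 * p y - (b y)^2 * p y) := by
            rw [hA, hB, ← integral_const_mul, ← integral_sub (hip.const_mul _) hibp]
        _ = ∫ y in Ω, ((b y₀)^2 - (b y)^2) * p y := by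
            congr 1; ext y; ring
    rw [h1, ← Real.norm_eq_abs]
    apply norm_setIntegral_le_of_norm_le_const hΩfin.lt_top
    · intro y hy
      have h2 := hp y hy
      have hd : ‖y₀ - y‖ ≤ R := by
        rw [← dist_eq_norm]
        exact le_trans (Metric.dist_le_diam_of_mem hΩbd hy₀ hy) hdiam
      rw [Real.norm_eq_abs, abs_mul]
      calc |(b y₀)^2 - (b y)^2| * |p y| ≤ (bs * m * R) * P₀ := by
            apply mul_le_mul _ _ (abs_nonneg _) (by positivity)
            · exact le_trans (hLip y hy)
                (by nlinarith [hd, (by positivity : (0:ℝ) ≤ bs * m)])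
            · rw [abs_of_nonneg (by linarith [h2.1])]; exact h2.2
        _ = bs * m * R * P₀ := by ring
  have key : |A / B - 1 / (b y₀)^2| = |A * (b y₀)^2 - B| / (B * (b y₀)^2) := by
    rw [div_sub_div A 1 hBpos.ne' hb0sq.ne', abs_div, mul_one,
      abs_of_pos (show (0:ℝ) < B * (b y₀)^2 by positivity)]
  rw [key]
  have heq : bs * (m:ℝ) * R * P₀ / ((b y₀)^2 * δ₁^2 * p₀)
      = (bs * (m:ℝ) * R * P₀ * V) / ((δ₁^2 * p₀ * V) * (b y₀)^2) := by
    rw [div_eq_div_iff (by positivity) (by positivity)]; ring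
  calc |A * (b y₀)^2 - B| / (B * (b y₀)^2)
      ≤ (bs * m * R * P₀ * V) / (B * (b y₀)^2) := by gcongr
    _ ≤ bs * (m : ℝ) * R * P₀ / ((b y₀)^2 * δ₁^2 * p₀) := by
        rw [heq]
        gcongr
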